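/- arXiv:1509.05892 — 2 statements merged into one kernel-verified Lean document; each statement's English description precedes it below -/
import Mathlib

section
/- (Casorati determinant D_3, type q-D_5^{(1)}.) Suppose Y, Ȳ ∈ ℂ[[X]] satisfy both (1−a_1X)(1−a_2X)·Y(qX) = (1−b_1X)(1−b_2X)·Y and (1−a_1X)·Ȳ = (1−b_1X)·Y, let (P, Q) be a Padé pair for Y and (P̄, Q̄) a Padé pair for Ȳ. Then there exists a constant c ∈ ℂ such that (1−a_2X)·P(qX)·Q̄(X) − (1−b_2X)·P̄(X)·Q(qX) = c·X^{m+n+1}. -/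
open Polynomial


lemma coe_comp_CqX (q : ℂ) (P : Polynomial ℂ) :
    ((P.comp (C q * X) : Polynomial ℂ) : PowerSeries ℂ)
      = PowerSeries.rescale q (P : PowerSeries ℂ) := by
  induction P using Polynomial.induction_on' with
  | add p r hp hr => simp [add_comp, hp, hr]
  | monomial k a =>
      simp only [← C_mul_X_pow_eq_monomial, mul_comp, C_comp, pow_comp, X_comp,
        Polynomial.coe_mul, Polynomial.coe_C, Polynomial.coe_pow, Polynomial.coe_X,
        map_mul, map_pow, PowerSeries.rescale_X, mul_pow]
      have : PowerSeries.rescale q (PowerSeries.C a) = PowerSeries.C a := by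
        ext k
        simp only [PowerSeries.coeff_rescale, PowerSeries.coeff_C]
        split <;> simp_all
      try rw [this]
      try ring


/-- Casorati determinant `D_3` for type q-D_5^{(1)}. -/
theorem casorati_D3_qD5
    (q a1 a2 b1 b2 : ℂ) (m n : ℕ)
    (Y Ybar : PowerSeries ℂ)
    (hY : (1 - PowerSeries.C a1 * PowerSeries.X) * (1 - PowerSeries.C a2 * PowerSeries.X) *
        PowerSeries.rescale q Y =
      (1 - PowerSeries.C b1 * PowerSeries.X) * (1 - PowerSeries.C b2 * PowerSeries.X) * Y)
    (hYY : (1 - PowerSeries.C a1 * PowerSeries.X) * Ybar =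
      (1 - PowerSeries.C b1 * PowerSeries.X) * Y)
    (P Q : Polynomial ℂ) (hdP : P.degree ≤ m) (hdQ : Q.degree ≤ n)
    (hPade : (PowerSeries.X : PowerSeries ℂ) ^ (m + n + 1) ∣
      Y * (Q : PowerSeries ℂ) - (P : PowerSeries ℂ))
    (Pbar Qbar : Polynomial ℂ) (hdPbar : Pbar.degree ≤ m) (hdQbar : Qbar.degree ≤ n)
    (hPadebar : (PowerSeries.X : PowerSeries ℂ) ^ (m + n + 1) ∣
      Ybar * (Qbar : PowerSeries ℂ) - (Pbar : PowerSeries ℂ)) :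
    ∃ c : ℂ,
      (1 - C a2 * X) * (P.comp (C q * X)) * Qbar - (1 - C b2 * X) * Pbar * (Q.comp (C q * X)) =
        C c * X ^ (m + n + 1) := by
  set N := m + n + 1 with hN
  set D : Polynomial ℂ :=
    (1 - C a2 * X) * (P.comp (C q * X)) * Qbar - (1 - C b2 * X) * Pbar * (Q.comp (C q * X))
    with hD
  -- cancellation key
  have hu : (1 - PowerSeries.C a1 * PowerSeries.X : PowerSeries ℂ) ≠ 0 := by
    intro h
    have := congrArg (PowerSeries.constantCoeff) h
    simp at this
  have key : (1 - PowerSeries.C a2 * PowerSeries.X) * PowerSeries.rescale q Y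
      = (1 - PowerSeries.C b2 * PowerSeries.X) * Ybar :=
    mul_left_cancel₀ hu (by linear_combination hY - (1 - PowerSeries.C b2 * PowerSeries.X) * hYY)
  obtain ⟨S, hS⟩ := hPade
  obtain ⟨Sb, hSb⟩ := hPadebar
  have hS' : PowerSeries.rescale q Y * PowerSeries.rescale q (Q : PowerSeries ℂ)
      - PowerSeries.rescale q (P : PowerSeries ℂ)
      = (PowerSeries.C q * PowerSeries.X) ^ N * PowerSeries.rescale q S := by
    have := congrArg (PowerSeries.rescale q) hS
    simpa [map_mul, map_sub, map_pow, PowerSeries.rescale_X] using this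
  -- divisibility of coe D
  have hDcoe : ((D : Polynomial ℂ) : PowerSeries ℂ)
      = PowerSeries.X ^ N *
        ((1 - PowerSeries.C b2 * PowerSeries.X) * Sb * PowerSeries.rescale q (Q : PowerSeries ℂ)
          - (1 - PowerSeries.C a2 * PowerSeries.X) * PowerSeries.C (q ^ N)
            * PowerSeries.rescale q S * (Qbar : PowerSeries ℂ)) := by
    have hexp : ((D : Polynomial ℂ) : PowerSeries ℂ)
        = (1 - PowerSeries.C a2 * PowerSeries.X)
            * PowerSeries.rescale q (P : PowerSeries ℂ) * (Qbar : PowerSeries ℂ)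
          - (1 - PowerSeries.C b2 * PowerSeries.X) * (Pbar : PowerSeries ℂ)
            * PowerSeries.rescale q (Q : PowerSeries ℂ) := by
      simp [hD, coe_comp_CqX]
    rw [hexp]
    have hqX : (PowerSeries.C q * PowerSeries.X) ^ N
        = PowerSeries.C (q ^ N) * PowerSeries.X ^ N := by
      rw [mul_pow, map_pow]
    rw [hqX] at hS'
    linear_combination
      (-(1 - PowerSeries.C a2 * PowerSeries.X) * (Qbar : PowerSeries ℂ)) * hS'
      + ((1 - PowerSeries.C b2 * PowerSeries.X)
          * PowerSeries.rescale q (Q : PowerSeries ℂ)) * hSb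
      + (PowerSeries.rescale q (Q : PowerSeries ℂ) * (Qbar : PowerSeries ℂ)) * key
  have hcoeff : ∀ k < N, D.coeff k = 0 := by
    intro k hk
    have : (PowerSeries.coeff k) ((D : Polynomial ℂ) : PowerSeries ℂ) = 0 := by
      rw [hDcoe]
      exact (PowerSeries.X_pow_dvd_iff.mp ⟨_, rfl⟩) k hk
    simpa [Polynomial.coeff_coe] using this
  -- degree bound
  have hdeg : D.degree ≤ N := by
    have h1 : (1 - C a2 * X : Polynomial ℂ).degree ≤ 1 := by compute_degree
    have h1' : (1 - C b2 * X : Polynomial ℂ).degree ≤ 1 := by compute_degree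
    have hcomp : ∀ (R : Polynomial ℂ) (d : ℕ), R.degree ≤ d → (R.comp (C q * X)).degree ≤ d := by
      intro R d hRd
      rw [← Polynomial.natDegree_le_iff_degree_le] at hRd ⊢
      calc (R.comp (C q * X)).natDegree ≤ R.natDegree * (C q * X).natDegree :=
            natDegree_comp_le
        _ ≤ R.natDegree * 1 := Nat.mul_le_mul_left _ (by
            simpa using natDegree_C_mul_le q (X : Polynomial ℂ))
        _ ≤ d := by simpa using hRd
    apply le_trans (degree_sub_le _ _)
    rw [max_le_iff]
    constructor
    · apply le_trans (degree_mul_le _ _)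
      refine le_trans (add_le_add (degree_mul_le _ _) le_rfl) ?_
      refine le_trans (add_le_add (add_le_add h1 (hcomp P m hdP)) hdQbar) ?_
      rw [hN]
      norm_cast
      omega
    · apply le_trans (degree_mul_le _ _)
      refine le_trans (add_le_add (degree_mul_le _ _) le_rfl) ?_
      refine le_trans (add_le_add (add_le_add h1' hdPbar) (hcomp Q n hdQ)) ?_
      rw [hN]
      norm_cast
      omega
  refine ⟨D.coeff N, ?_⟩
  show D = C (D.coeff N) * X ^ N
  ext k
  rcases lt_trichotomy k N with hk | hk | hk
  · rw [hcoeff k hk]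
    simp [coeff_C_mul, coeff_X_pow, if_neg (ne_of_lt hk)]
  · subst hk
    simp [coeff_C_mul, coeff_X_pow]
  · rw [Polynomial.coeff_eq_zero_of_degree_lt (lt_of_le_of_lt hdeg (by exact_mod_cast hk))]
    simp [coeff_C_mul, coeff_X_pow, if_neg (ne_of_gt hk)]
end

section
/- (Casorati determinant D_3, type q-A_4^{(1)}.) Suppose Y, Ȳ ∈ ℂ[[X]] satisfy both (1−a_1X)(1−a_2X)·Y(qX) = (1−b_1X)·Y and (1−a_1X)·Ȳ = (1−b_1X)·Y, let (P, Q) be a Padé pair for Y and (P̄, Q̄) a Padé pair for Ȳ. Then there exists a constant c ∈ ℂ such that (1−a_2X)·P(qX)·Q̄(X) − P̄(X)·Q(qX) = c·X^{m+n+1}. -/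
open Polynomial

lemma coeff_comp_C_mul_X (P : ℂ[X]) (q : ℂ) (k : ℕ) :
    (P.comp (C q * X)).coeff k = q ^ k * P.coeff k := by
  induction P using Polynomial.induction_on' with
  | add p r hp hr => simp [add_comp, hp, hr, mul_add]
  | monomial i a =>
    rw [monomial_comp, show (monomial i a) = C a * X ^ i from by
      rw [C_mul_X_pow_eq_monomial]]
    rw [show (C a * (C q * X) ^ i) = C (a * q ^ i) * X ^ i from by
      rw [mul_pow, ← C_pow, C_mul]; ring]
    rw [coeff_C_mul, coeff_C_mul, coeff_X_pow]
    split_ifs with h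
    · subst h; ring
    · ring

lemma coe_comp_C_mul_X (P : ℂ[X]) (q : ℂ) :
    ((P.comp (C q * X) : ℂ[X]) : PowerSeries ℂ) = PowerSeries.rescale q ↑P := by
  ext k
  rw [Polynomial.coeff_coe, PowerSeries.coeff_rescale, Polynomial.coeff_coe,
    coeff_comp_C_mul_X]

lemma degree_comp_C_mul_X_le (P : ℂ[X]) (q : ℂ) {m : ℕ} (h : P.degree ≤ m) :
    (P.comp (C q * X)).degree ≤ m := by
  refine degree_le_iff_coeff_zero _ _ |>.2 fun k hk => ?_
  rw [coeff_comp_C_mul_X, (degree_le_iff_coeff_zero _ _).1 h k hk, mul_zero]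

/-- Casorati determinant `D_3` for type q-A_4^{(1)}. -/
theorem casorati_D3_qA4
    (q a1 a2 b1 : ℂ) (m n : ℕ)
    (Y Ybar : PowerSeries ℂ)
    (hY : (1 - PowerSeries.C a1 * PowerSeries.X) * (1 - PowerSeries.C a2 * PowerSeries.X) *
        PowerSeries.rescale q Y =
      (1 - PowerSeries.C b1 * PowerSeries.X) * Y)
    (hYY : (1 - PowerSeries.C a1 * PowerSeries.X) * Ybar =
      (1 - PowerSeries.C b1 * PowerSeries.X) * Y)
    (P Q : Polynomial ℂ) (hdP : P.degree ≤ m) (hdQ : Q.degree ≤ n)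
    (hPade : (PowerSeries.X : PowerSeries ℂ) ^ (m + n + 1) ∣
      Y * (Q : PowerSeries ℂ) - (P : PowerSeries ℂ))
    (Pbar Qbar : Polynomial ℂ) (hdPbar : Pbar.degree ≤ m) (hdQbar : Qbar.degree ≤ n)
    (hPadebar : (PowerSeries.X : PowerSeries ℂ) ^ (m + n + 1) ∣
      Ybar * (Qbar : PowerSeries ℂ) - (Pbar : PowerSeries ℂ)) :
    ∃ c : ℂ,
      (1 - C a2 * X) * (P.comp (C q * X)) * Qbar - Pbar * (Q.comp (C q * X)) =
        C c * X ^ (m + n + 1) := by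
  set N := m + n + 1 with hN
  set D : ℂ[X] := (1 - C a2 * X) * (P.comp (C q * X)) * Qbar - Pbar * (Q.comp (C q * X))
    with hD
  have hunit : (1 - PowerSeries.C a1 * PowerSeries.X) ≠ 0 := by
    intro h
    have := congrArg (PowerSeries.constantCoeff) h
    simp at this
  have key : (1 - PowerSeries.C a2 * PowerSeries.X) * PowerSeries.rescale q Y = Ybar := by
    have h2 : (1 - PowerSeries.C a1 * PowerSeries.X) *
        ((1 - PowerSeries.C a2 * PowerSeries.X) * PowerSeries.rescale q Y) =
        (1 - PowerSeries.C a1 * PowerSeries.X) * Ybar := by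
      rw [← mul_assoc, hY, hYY]
    exact mul_left_cancel₀ hunit h2
  have hPade' : (PowerSeries.X : PowerSeries ℂ) ^ N ∣
      PowerSeries.rescale q (P : PowerSeries ℂ) -
        PowerSeries.rescale q Y * PowerSeries.rescale q (Q : PowerSeries ℂ) := by
    rw [PowerSeries.X_pow_dvd_iff]
    intro i hi
    have h0 := (PowerSeries.X_pow_dvd_iff.1 hPade) i hi
    rw [← map_mul, ← map_sub, PowerSeries.coeff_rescale]
    have h1 : (PowerSeries.coeff i) ((P : PowerSeries ℂ) - Y * (Q : PowerSeries ℂ)) = 0 := by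
      rw [show (P : PowerSeries ℂ) - Y * (Q : PowerSeries ℂ) =
        -(Y * (Q : PowerSeries ℂ) - (P : PowerSeries ℂ)) from by ring, map_neg, h0, neg_zero]
    rw [h1, mul_zero]
  have hDdvd : (PowerSeries.X : PowerSeries ℂ) ^ N ∣ (D : PowerSeries ℂ) := by
    have hcoe : (D : PowerSeries ℂ) =
        (1 - PowerSeries.C a2 * PowerSeries.X) * (Qbar : PowerSeries ℂ) *
          (PowerSeries.rescale q (P : PowerSeries ℂ) -
            PowerSeries.rescale q Y * PowerSeries.rescale q (Q : PowerSeries ℂ)) +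
        PowerSeries.rescale q (Q : PowerSeries ℂ) *
          (Ybar * (Qbar : PowerSeries ℂ) - (Pbar : PowerSeries ℂ)) := by
      rw [hD]
      push_cast
      rw [coe_comp_C_mul_X, coe_comp_C_mul_X, ← key]
      ring
    rw [hcoe]
    exact dvd_add (hPade'.mul_left _) (hPadebar.mul_left _)
  have hcoeffs : ∀ i < N, D.coeff i = 0 := by
    intro i hi
    have := PowerSeries.X_pow_dvd_iff.1 hDdvd i hi
    rwa [Polynomial.coeff_coe] at this
  have h1 : (1 - C a2 * X : ℂ[X]).degree ≤ 1 := by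
    refine (degree_sub_le _ _).trans (max_le (degree_one_le.trans (by norm_num)) ?_)
    calc (C a2 * X : ℂ[X]).degree ≤ (C a2 : ℂ[X]).degree + (X : ℂ[X]).degree :=
          degree_mul_le _ _
      _ ≤ 0 + 1 := add_le_add degree_C_le degree_X_le
      _ = 1 := by norm_num
  have hdeg : D.degree ≤ (N : ℕ) := by
    have hPc := degree_comp_C_mul_X_le P q hdP
    have hQc := degree_comp_C_mul_X_le Q q hdQ
    refine (degree_sub_le _ _).trans (max_le ?_ ?_)
    · calc ((1 - C a2 * X) * P.comp (C q * X) * Qbar).degree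
          ≤ ((1 - C a2 * X) * P.comp (C q * X)).degree + Qbar.degree := degree_mul_le _ _
        _ ≤ ((1 - C a2 * X).degree + (P.comp (C q * X)).degree) + Qbar.degree :=
            add_le_add (degree_mul_le _ _) le_rfl
        _ ≤ (1 + (m : WithBot ℕ)) + (n : WithBot ℕ) := add_le_add (add_le_add h1 hPc) hdQbar
        _ ≤ ((N : ℕ) : WithBot ℕ) := by rw [hN]; norm_cast; omega
    · calc (Pbar * Q.comp (C q * X)).degree
          ≤ Pbar.degree + (Q.comp (C q * X)).degree := degree_mul_le _ _
        _ ≤ (m : WithBot ℕ) + (n : WithBot ℕ) := add_le_add hdPbar hQc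
        _ ≤ ((N : ℕ) : WithBot ℕ) := by rw [hN]; norm_cast; omega
  refine ⟨D.coeff N, ?_⟩
  rw [hD] at *
  ext i
  rw [coeff_C_mul, coeff_X_pow]
  rcases lt_trichotomy i N with h | h | h
  · rw [hcoeffs i h, if_neg h.ne, mul_zero]
  · rw [h, if_pos rfl, mul_one]
  · rw [if_neg h.ne', mul_zero]
    exact coeff_eq_zero_of_degree_lt (hdeg.trans_lt (by exact_mod_cast h))
end
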